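/- Let G be a finite group and A an abelian group. Let (H, φ) and (K, ψ) be pairs consisting of subgroups H, K ≤ G with homomorphisms φ : H → A and ψ : K → A. Suppose there exists x ∈ G such that H ≤ xKx⁻¹ and φ(h) = ψ(x⁻¹hx) for all h ∈ H, and there exists y ∈ G such that K ≤ yHy⁻¹ and ψ(k) = φ(y⁻¹ky) for all k ∈ K. Then the two pairs are G-conjugate: there exists g ∈ G such that gHg⁻¹ = K and ψ(ghg⁻¹) = φ(h) for all h ∈ H. -/
import Mathlib

/-- If the pair `(H, φ)` is subconjugate to `(K, ψ)` and vice versa, then the two pairs are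
`G`-conjugate. -/
theorem pairs_subconjugate_antisymm
    {G A : Type*} [Group G] [Finite G] [CommGroup A]
    (H K : Subgroup G) (φ : ↥H →* A) (ψ : ↥K →* A)
    (h1 : ∃ x : G, ∀ h : G, (hh : h ∈ H) →
      ∃ hk : x⁻¹ * h * x ∈ K, φ ⟨h, hh⟩ = ψ ⟨x⁻¹ * h * x, hk⟩)
    (h2 : ∃ y : G, ∀ k : G, (hk : k ∈ K) →
      ∃ hh : y⁻¹ * k * y ∈ H, ψ ⟨k, hk⟩ = φ ⟨y⁻¹ * k * y, hh⟩) :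
    ∃ g : G, (∀ h : G, h ∈ H ↔ g * h * g⁻¹ ∈ K) ∧
      ∀ h : G, (hh : h ∈ H) → ∃ hk : g * h * g⁻¹ ∈ K,
        ψ ⟨g * h * g⁻¹, hk⟩ = φ ⟨h, hh⟩ := by
  obtain ⟨x, hx⟩ := h1
  obtain ⟨y, hy⟩ := h2
  -- conjugates
  set H' := H.map ((MulAut.conj x⁻¹).toMonoidHom) with hH'
  set K' := K.map ((MulAut.conj y⁻¹).toMonoidHom) with hK'
  have memH' : ∀ g : G, g ∈ H' ↔ ∃ h ∈ H, x⁻¹ * h * x = g := by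
    intro g
    simp [hH', Subgroup.mem_map, MulAut.conj, mul_assoc]
  have hH'K : H' ≤ K := by
    intro g hg
    obtain ⟨h, hh, rfl⟩ := (memH' g).mp hg
    exact (hx h hh).1
  have hK'H : K' ≤ H := by
    intro g hg
    obtain ⟨k, hk, rfl⟩ := by
      simpa [hK', Subgroup.mem_map, MulAut.conj, mul_assoc] using hg
    simpa [mul_assoc] using (hy k hk).1
  have cardH' : Nat.card H' = Nat.card H :=
    (Nat.card_congr (H.equivMapOfInjective _ (MulAut.conj x⁻¹).injective).toEquiv).symm
  have cardK' : Nat.card K' = Nat.card K :=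
    (Nat.card_congr (K.equivMapOfInjective _ (MulAut.conj y⁻¹).injective).toEquiv).symm
  have hle1 : Nat.card H ≤ Nat.card K := cardH' ▸ Subgroup.card_le_of_le hH'K
  have hle2 : Nat.card K ≤ Nat.card H := cardK' ▸ Subgroup.card_le_of_le hK'H
  have hHK : H' = K := Subgroup.eq_of_le_of_card_ge hH'K (le_trans hle2 cardH'.symm.le)
  refine ⟨x⁻¹, ?_, ?_⟩
  · intro h
    rw [inv_inv]
    constructor
    · intro hh
      exact (hx h hh).1
    · intro hk
      have : x⁻¹ * h * x ∈ H' := hHK ▸ hk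
      obtain ⟨h', hh', heq⟩ := (memH' _).mp this
      have : h' = h := by
        have := mul_left_cancel (mul_right_cancel heq)
        exact this
      exact this ▸ hh'
  · intro h hh
    rw [inv_inv]
    obtain ⟨hk, he⟩ := hx h hh
    exact ⟨hk, he.symm⟩
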